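/- Closed form of the difference Riccati iterates: with V_t = [C; CA; CA²; …; CA^{t−1}] and T_t the block lower-triangular Toeplitz matrix with zero diagonal blocks and subdiagonal blocks CB, CAB, …, CA^{t−2}B, the sequence generated by X₀ = 0, X_{t+1} = CᵀC + AᵀX_t(I + BBᵀX_t)⁻¹A satisfies X_t = V_tᵀ(I + T_tT_tᵀ)⁻¹V_t for all t ≥ 1. -/

import Mathlib

open Matrix

/-- `V t = [C; CA; …; CA^{t-1}]`, with block row index `Fin t`. -/
def obsMat {n l : ℕ} (A : Matrix (Fin n) (Fin n) ℝ) (C : Matrix (Fin l) (Fin n) ℝ)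
    (t : ℕ) : Matrix (Fin t × Fin l) (Fin n) ℝ :=
  fun a j => (C * A ^ (a.1 : ℕ)) a.2 j

/-- `T t`: block lower-triangular Toeplitz matrix with zero diagonal blocks and
subdiagonal blocks `CB, CAB, …, CA^{t-2}B`. -/
def toepMat {n m l : ℕ} (A : Matrix (Fin n) (Fin n) ℝ) (B : Matrix (Fin n) (Fin m) ℝ)
    (C : Matrix (Fin l) (Fin n) ℝ) (t : ℕ) :
    Matrix (Fin t × Fin l) (Fin t × Fin m) ℝ :=
  fun a b =>
    if (b.1 : ℕ) < (a.1 : ℕ) then (C * A ^ ((a.1 : ℕ) - (b.1 : ℕ) - 1) * B) a.2 b.2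
    else 0

/-- conjTranspose is transpose over ℝ -/
lemma real_ct {a b : Type*} (M : Matrix a b ℝ) : Mᴴ = Mᵀ := by
  ext i j; simp [Matrix.conjTranspose_apply]

lemma psd_mul_transpose_self {a b : Type*} [Fintype a] [Fintype b] (M : Matrix a b ℝ) :
    (M * Mᵀ).PosSemidef := by
  have := Matrix.posSemidef_self_mul_conjTranspose M
  rwa [real_ct] at this

/-- one plus `M * Mᵀ` is positive definite. -/
lemma one_add_mul_transpose_posDef {a b : Type*} [Fintype a] [Fintype b] [DecidableEq a]
    (M : Matrix a b ℝ) : (1 + M * Mᵀ).PosDef :=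
  Matrix.PosDef.one.add_posSemidef (psd_mul_transpose_self M)

/-- The key Riccati algebra step (Woodbury). -/
lemma key_step {N M P : Type*} [Fintype N] [Fintype M] [Fintype P]
    [DecidableEq N] [DecidableEq M] [DecidableEq P]
    (B : Matrix N M ℝ) (V : Matrix P N ℝ) (Mt : Matrix P P ℝ) (hM : Mt.PosDef) :
    Vᵀ * (Mt + V * B * Bᵀ * Vᵀ)⁻¹ * V
      = Vᵀ * Mt⁻¹ * V * (1 + B * Bᵀ * (Vᵀ * Mt⁻¹ * V))⁻¹ := by
  set Y : Matrix N N ℝ := Vᵀ * Mt⁻¹ * V with hYdef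
  have hY : Y.PosSemidef := by
    have := hM.inv.posSemidef.mul_mul_conjTranspose_same Vᵀ
    rwa [real_ct, transpose_transpose] at this
  have hSpd : (1 + Bᵀ * (Vᵀ * Mt⁻¹ * (V * B))).PosDef := by
    have h2 := hY.conjTranspose_mul_mul_same B
    rw [real_ct] at h2
    have := Matrix.PosDef.one.add_posSemidef h2
    convert this using 2
    simp only [hYdef, Matrix.mul_assoc]
  have hSunit : IsUnit (1 + Bᵀ * (Vᵀ * Mt⁻¹ * (V * B))) := hSpd.isUnit
  -- Woodbury
  have hwood := Matrix.add_mul_mul_inv_eq_sub Mt (V * B) (1 : Matrix M M ℝ) (Bᵀ * Vᵀ)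
    hM.isUnit isUnit_one (by rwa [inv_one, show Bᵀ * Vᵀ * Mt⁻¹ * (V * B) = Bᵀ * (Vᵀ * Mt⁻¹ * (V * B)) by simp only [Matrix.mul_assoc]])
  rw [inv_one] at hwood
  have hshape : Mt + V * B * Bᵀ * Vᵀ = Mt + V * B * (1 : Matrix M M ℝ) * (Bᵀ * Vᵀ) := by
    simp only [Matrix.mul_one, Matrix.mul_assoc]
  obtain ⟨G, hGdef⟩ : ∃ G : Matrix M M ℝ, G = (1 + Bᵀ * (Vᵀ * Mt⁻¹ * (V * B)))⁻¹ := ⟨_, rfl⟩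
  have hwood' : (Mt + V * B * Bᵀ * Vᵀ)⁻¹
      = Mt⁻¹ - Mt⁻¹ * (V * B) * G * (Bᵀ * Vᵀ) * Mt⁻¹ := by
    rw [hshape, hwood, hGdef]
    simp only [Matrix.mul_assoc]
  -- left side
  have hleft : Vᵀ * (Mt + V * B * Bᵀ * Vᵀ)⁻¹ * V = Y - Y * B * G * (Bᵀ * Y) := by
    rw [hwood']
    simp only [hYdef, Matrix.mul_sub, Matrix.sub_mul, Matrix.mul_assoc]
  rw [hleft]
  symm
  -- right side
  have hdet : IsUnit (1 + B * Bᵀ * Y).det := by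
    have : (1 + B * (Bᵀ * Y)).det = (1 + Bᵀ * Y * B).det := Matrix.det_one_add_mul_comm B (Bᵀ * Y)
    rw [Matrix.mul_assoc, this]
    have : (1 + Bᵀ * Y * B) = 1 + Bᵀ * (Vᵀ * Mt⁻¹ * (V * B)) := by
      simp only [hYdef, Matrix.mul_assoc]
    rw [this]
    exact (Matrix.isUnit_iff_isUnit_det _).mp hSunit
  have hcan : G * (1 + Bᵀ * Y * B) = 1 := by
    have : (1 + Bᵀ * Y * B) = 1 + Bᵀ * (Vᵀ * Mt⁻¹ * (V * B)) := by
      simp only [hYdef, Matrix.mul_assoc]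
    rw [this, hGdef]
    exact Matrix.nonsing_inv_mul _ ((Matrix.isUnit_iff_isUnit_det _).mp hSunit)
  have hexpand : (Y - Y * B * G * (Bᵀ * Y)) * (1 + B * Bᵀ * Y)
      = Y + Y * B * (Bᵀ * Y) - Y * B * (G * (1 + Bᵀ * Y * B)) * (Bᵀ * Y) := by
    simp only [Matrix.mul_add, Matrix.add_mul, Matrix.sub_mul, Matrix.mul_sub, Matrix.mul_one, Matrix.one_mul, Matrix.mul_assoc]
    abel
  rw [hcan, Matrix.mul_one] at hexpand
  have hexpand2 : (Y - Y * B * G * (Bᵀ * Y)) * (1 + B * Bᵀ * Y) = Y := by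
    rw [hexpand]; abel
  have hinv : (1 + B * Bᵀ * Y) * (1 + B * Bᵀ * Y)⁻¹ = 1 := Matrix.mul_nonsing_inv _ hdet
  calc Y * (1 + B * Bᵀ * Y)⁻¹
      = ((Y - Y * B * G * (Bᵀ * Y)) * (1 + B * Bᵀ * Y)) * (1 + B * Bᵀ * Y)⁻¹ := by rw [hexpand2]
    _ = (Y - Y * B * G * (Bᵀ * Y)) * ((1 + B * Bᵀ * Y) * (1 + B * Bᵀ * Y)⁻¹) := by
        rw [Matrix.mul_assoc]
    _ = Y - Y * B * G * (Bᵀ * Y) := by rw [hinv, Matrix.mul_one]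


/-- Splitting off the first block row. -/
def splitEquiv (t l : ℕ) : (Fin l ⊕ Fin t × Fin l) ≃ (Fin (t + 1) × Fin l) where
  toFun x := Sum.elim (fun j => (0, j)) (fun p => (p.1.succ, p.2)) x
  invFun p :=
    if h : (p.1 : ℕ) = 0 then Sum.inl p.2
    else Sum.inr (⟨(p.1 : ℕ) - 1, by have := p.1.isLt; omega⟩, p.2)
  left_inv := by
    rintro (j | ⟨i, j⟩) <;> simp [Fin.ext_iff]
  right_inv := by
    rintro ⟨i, j⟩
    by_cases h : (i : ℕ) = 0
    · simp [h, Prod.ext_iff, Fin.ext_iff]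
    · simp only [h, dif_neg, not_false_iff, Sum.elim_inr]
      have := i.isLt
      simp [Fin.ext_iff]
      omega

lemma obs_succ {n l : ℕ} (A : Matrix (Fin n) (Fin n) ℝ) (C : Matrix (Fin l) (Fin n) ℝ)
    (t : ℕ) :
    (obsMat A C (t + 1)).submatrix (splitEquiv t l) id
      = fromRows C (obsMat A C t * A) := by
  ext x k
  cases x with
  | inl j => simp [obsMat, splitEquiv, Matrix.submatrix_apply]
  | inr p =>
      simp only [Matrix.submatrix_apply, splitEquiv, Equiv.coe_fn_mk, Sum.elim_inr, obsMat,
        Matrix.fromRows_apply_inr, id]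
      rw [show ((p.1.succ : Fin (t+1)) : ℕ) = (p.1 : ℕ) + 1 from Fin.val_succ p.1, pow_succ,
        ← Matrix.mul_assoc]
      simp [Matrix.mul_apply, obsMat]

lemma toep_succ {n m l : ℕ} (A : Matrix (Fin n) (Fin n) ℝ) (B : Matrix (Fin n) (Fin m) ℝ)
    (C : Matrix (Fin l) (Fin n) ℝ) (t : ℕ) :
    (toepMat A B C (t + 1)).submatrix (splitEquiv t l) (splitEquiv t m)
      = fromBlocks 0 0 (obsMat A C t * B) (toepMat A B C t) := by
  ext x y
  cases x with
  | inl j =>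
      cases y with
      | inl j' => simp [toepMat, splitEquiv, Matrix.submatrix_apply]
      | inr q => simp [toepMat, splitEquiv, Matrix.submatrix_apply]
  | inr p =>
      cases y with
      | inl j' =>
          simp only [Matrix.submatrix_apply, splitEquiv, Equiv.coe_fn_mk, Sum.elim_inl,
            Sum.elim_inr, toepMat, fromBlocks_apply₂₁, Fin.val_succ, Fin.val_zero]
          simp only [Nat.zero_lt_succ, ↓reduceIte]
          simp only [Nat.sub_zero, Nat.add_sub_cancel]
          rfl
      | inr q =>
          simp only [Matrix.submatrix_apply, splitEquiv, Equiv.coe_fn_mk, Sum.elim_inr,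
            toepMat, fromBlocks_apply₂₂, Fin.val_succ]
          by_cases h : (q.1 : ℕ) < (p.1 : ℕ)
          · simp only [Nat.add_lt_add_iff_right, h, ↓reduceIte]
            have he : (p.1 : ℕ) + 1 - ((q.1 : ℕ) + 1) - 1 = (p.1 : ℕ) - (q.1 : ℕ) - 1 := by omega
            rw [he]
          · simp only [Nat.add_lt_add_iff_right, h, ↓reduceIte]

theorem stmt_9 {n m l : ℕ}
    (A : Matrix (Fin n) (Fin n) ℝ) (B : Matrix (Fin n) (Fin m) ℝ)
    (C : Matrix (Fin l) (Fin n) ℝ)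
    (X : ℕ → Matrix (Fin n) (Fin n) ℝ)
    (hX0 : X 0 = 0)
    (hXrec : ∀ t, X (t + 1) = Cᵀ * C + Aᵀ * X t * (1 + B * Bᵀ * X t)⁻¹ * A) :
    ∀ t, 1 ≤ t →
      X t = (obsMat A C t)ᵀ *
        (1 + toepMat A B C t * (toepMat A B C t)ᵀ)⁻¹ * obsMat A C t := by
  have main : ∀ t, X t = (obsMat A C t)ᵀ *
      (1 + toepMat A B C t * (toepMat A B C t)ᵀ)⁻¹ * obsMat A C t := by
    intro t
    induction t with
    | zero =>
        rw [hX0]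
        ext i j
        simp [Matrix.mul_apply]
    | succ t ih =>
        have e1 := splitEquiv t l
        set V := obsMat A C t with hV
        set T := toepMat A B C t with hT
        set V1 := obsMat A C (t + 1) with hV1
        set T1 := toepMat A B C (t + 1) with hT1
        set K : Matrix (Fin t × Fin l) (Fin t × Fin l) ℝ
          := (1 + T * Tᵀ) + V * B * Bᵀ * Vᵀ with hK
        have hMpd : (1 + T * Tᵀ).PosDef := one_add_mul_transpose_posDef T
        have hKpd : K.PosDef := by
          refine hMpd.add_posSemidef ?_
          have := psd_mul_transpose_self (V * B)
          rwa [Matrix.transpose_mul, ← Matrix.mul_assoc] at this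
        -- block structure of the Gram matrix
        have hTs : T1.submatrix (splitEquiv t l) (splitEquiv t m)
            = fromBlocks 0 0 (V * B) T := toep_succ A B C t
        have hVs : V1.submatrix (splitEquiv t l) id = fromRows C (V * A) := obs_succ A C t
        have hPsub : (1 + T1 * T1ᵀ).submatrix (splitEquiv t l) (splitEquiv t l)
            = fromBlocks 1 0 0 K := by
          simp only [Matrix.submatrix_add, Pi.add_apply, Matrix.submatrix_one_equiv]
          have h2 : (T1 * T1ᵀ).submatrix (splitEquiv t l) (splitEquiv t l)
              = (T1.submatrix (splitEquiv t l) (splitEquiv t m))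
                * (T1.submatrix (splitEquiv t l) (splitEquiv t m))ᵀ := by
            rw [Matrix.transpose_submatrix, Matrix.submatrix_mul_equiv]
          rw [h2, hTs, fromBlocks_transpose, fromBlocks_multiply, ← fromBlocks_one,
            fromBlocks_add]
          congr 1 <;> simp [Matrix.transpose_mul, Matrix.mul_assoc, hK]
          abel
        have hPinv : (fromBlocks (1 : Matrix (Fin l) (Fin l) ℝ) 0 0 K)⁻¹
            = fromBlocks 1 0 0 K⁻¹ := by
          rw [Matrix.inv_fromBlocks_zero₂₁_of_isUnit_iff _ _ _
            (by simp [isUnit_one, hKpd.isUnit])]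
          simp
        have hchain : V1ᵀ * (1 + T1 * T1ᵀ)⁻¹ * V1
            = Cᵀ * C + Aᵀ * (Vᵀ * K⁻¹ * V) * A := by
          have hred : V1ᵀ * (1 + T1 * T1ᵀ)⁻¹ * V1
              = (V1.submatrix (splitEquiv t l) id)ᵀ
                * ((1 + T1 * T1ᵀ).submatrix (splitEquiv t l) (splitEquiv t l))⁻¹
                * (V1.submatrix (splitEquiv t l) id) := by
            rw [Matrix.inv_submatrix_equiv, Matrix.transpose_submatrix,
              Matrix.submatrix_mul_equiv, Matrix.submatrix_mul_equiv, Matrix.submatrix_id_id]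
          rw [hred, hVs, hPsub, hPinv, transpose_fromRows, fromCols_mul_fromBlocks,
            fromCols_mul_fromRows]
          simp only [Matrix.mul_one, Matrix.mul_zero, add_zero, zero_add,
            Matrix.transpose_mul, Matrix.mul_assoc]
        have hks := key_step B V (1 + T * Tᵀ) hMpd
        rw [hXrec t, ih]
        rw [Matrix.mul_assoc Aᵀ ((Vᵀ * (1 + T * Tᵀ)⁻¹ * V)) _]
        rw [← hks]
        rw [← hK]
        exact hchain.symm
  intro t _
  exact main t
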